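/- For any A ∈ ℝ^{n×n}, any subspace V ⊆ ℝ^n, and any real h, the subspace e^{Ah}·V is contained in Γ_A V := Σ_{i=0}^{n-1} A^i V. -/

import Mathlib

/-- `Γ_A V = Σ_{i=0}^{n-1} A^i V`. -/
def gammaSub {n : ℕ} (A : Matrix (Fin n) (Fin n) ℝ) (V : Submodule ℝ (Fin n → ℝ)) :
    Submodule ℝ (Fin n → ℝ) :=
  ⨆ i : Fin n, Submodule.map ((A ^ (i : ℕ)).mulVecLin) V

open Polynomial NormedSpace Matrix
open scoped Nat

/-- The linear map `M ↦ M *ᵥ v`. -/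
noncomputable def mulVecAtₗ {n : ℕ} (v : Fin n → ℝ) :
    Matrix (Fin n) (Fin n) ℝ →ₗ[ℝ] (Fin n → ℝ) where
  toFun M := M *ᵥ v
  map_add' M N := Matrix.add_mulVec M N v
  map_smul' c M := Matrix.smul_mulVec c M v

lemma pow_mulVec_mem_gamma {n : ℕ} (A : Matrix (Fin n) (Fin n) ℝ)
    (V : Submodule ℝ (Fin n → ℝ)) (k : ℕ) {v : Fin n → ℝ} (hv : v ∈ V) :
    (A ^ k) *ᵥ v ∈ gammaSub A V := by
  have hbase : ∀ i : ℕ, i < n → (A ^ i) *ᵥ v ∈ gammaSub A V := by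
    intro i hi
    exact Submodule.mem_iSup_of_mem (⟨i, hi⟩ : Fin n) ⟨v, hv, rfl⟩
  rcases Nat.eq_zero_or_pos n with hn | hn
  · subst hn
    have : (A ^ k) *ᵥ v = 0 := Subsingleton.elim _ _
    rw [this]; exact Submodule.zero_mem _
  · set p : ℝ[X] := X ^ k %ₘ A.charpoly with hp
    have hdeg : p.natDegree < n := by
      rcases eq_or_ne p 0 with h0 | h0
      · simpa [h0] using hn
      · have hd : p.degree < A.charpoly.degree :=
          Polynomial.degree_modByMonic_lt _ A.charpoly_monic
        rw [A.charpoly_degree_eq_dim, Fintype.card_fin] at hd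
        exact (Polynomial.natDegree_lt_iff_degree_lt h0).2 hd
    have hA : A ^ k = ∑ i ∈ Finset.range n, p.coeff i • A ^ i := by
      rw [Matrix.pow_eq_aeval_mod_charpoly, ← hp, aeval_eq_sum_range' hdeg]
    have hmap := map_sum (mulVecAtₗ v) (fun i => p.coeff i • A ^ i) (Finset.range n)
    simp only [mulVecAtₗ, LinearMap.coe_mk, AddHom.coe_mk] at hmap
    have : (A ^ k) *ᵥ v = ∑ i ∈ Finset.range n, p.coeff i • ((A ^ i) *ᵥ v) := by
      rw [hA, hmap]
      simp [Matrix.smul_mulVec]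
    rw [this]
    exact Submodule.sum_mem _ fun i hi =>
      Submodule.smul_mem _ _ (hbase i (Finset.mem_range.1 hi))

/-- For any `A`, any subspace `V ⊆ ℝ^n` and any real `h`, `e^{Ah}·V ⊆ Γ_A V`. -/
theorem exp_map_le_gamma {n : ℕ} (A : Matrix (Fin n) (Fin n) ℝ)
    (V : Submodule ℝ (Fin n → ℝ)) (h : ℝ) :
    Submodule.map (NormedSpace.exp (h • A)).mulVecLin V ≤ gammaSub A V := by
  letI : SeminormedRing (Matrix (Fin n) (Fin n) ℝ) := Matrix.linftyOpSemiNormedRing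
  letI : NormedRing (Matrix (Fin n) (Fin n) ℝ) := Matrix.linftyOpNormedRing
  letI : NormedAlgebra ℝ (Matrix (Fin n) (Fin n) ℝ) := Matrix.linftyOpNormedAlgebra
  rintro x ⟨v, hv, rfl⟩
  let Lc : Matrix (Fin n) (Fin n) ℝ →L[ℝ] (Fin n → ℝ) :=
    LinearMap.toContinuousLinearMap (mulVecAtₗ v)
  have hsum : Summable fun k : ℕ => (k !⁻¹ : ℝ) • (h • A) ^ k := expSeries_summable' _
  have key : (NormedSpace.exp (h • A)).mulVecLin v
      = ∑' k : ℕ, (k !⁻¹ : ℝ) • ((h • A) ^ k *ᵥ v) := by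
    have : (NormedSpace.exp (h • A)).mulVecLin v = Lc (NormedSpace.exp (h • A)) := by
      simp [Lc, mulVecAtₗ, Matrix.mulVecLin_apply, LinearMap.coe_toContinuousLinearMap']
    rw [this, exp_eq_tsum ℝ, Lc.map_tsum hsum]
    simp [Lc, mulVecAtₗ, Matrix.smul_mulVec]
  rw [key]
  have hsum2 : Summable fun k : ℕ => (k !⁻¹ : ℝ) • ((h • A) ^ k *ᵥ v) := by
    have := hsum.map Lc Lc.continuous
    simpa [Lc, mulVecAtₗ, Function.comp_def, Matrix.smul_mulVec] using this
  have hmem : ∀ k : ℕ, (k !⁻¹ : ℝ) • ((h • A) ^ k *ᵥ v) ∈ gammaSub A V := by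
    intro k
    rw [_root_.smul_pow, Matrix.smul_mulVec]
    exact Submodule.smul_mem _ _ (Submodule.smul_mem _ _ (pow_mulVec_mem_gamma A V k hv))
  have hclosed : IsClosed (gammaSub A V : Set (Fin n → ℝ)) :=
    Submodule.closed_of_finiteDimensional _
  exact hclosed.mem_of_tendsto hsum2.hasSum
    (Filter.Eventually.of_forall fun s => Submodule.sum_mem _ fun k _ => hmem k)
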